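/- Let A and A' be unital C*-algebras, P₁ a nontrivial symmetric projection in A, P₂ = I_A − P₁, A_{jk} = P_j A P_k, and suppose A satisfies (♠): for j ∈ {1,2}, P_j A X = {0} implies X = 0. Fix an integer n ≥ 2 and let φ: A → A' be a bijective map with φ(I_A) = I_{A'} satisfying (•): φ(p_{n*}(A,B,Ξ,…,Ξ)) = p_{n*}(φ(A),φ(B),φ(Ξ),…,φ(Ξ)) for all A, B ∈ A and Ξ ∈ {P₁, P₂, I_A}. Then for any A₁₂ ∈ A₁₂ and B₂₁ ∈ A₂₁ one has φ(A₁₂ + B₂₁) = φ(A₁₂) + φ(B₂₁). -/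
import Mathlib


/-- The `*`-Lie product `[x,y]_* = xy - y x*`. -/
def starLie {R : Type*} [Ring R] [StarRing R] (x y : R) : R := x * y - y * star x

/-- `pn n a b xi = p_{n*}(a, b, xi, ..., xi)` (with `n - 2` trailing copies of `xi`). -/
def pn {R : Type*} [Ring R] [StarRing R] (n : ℕ) (a b ξ : R) : R :=
  (fun z => starLie z ξ)^[n - 2] (starLie a b)

section helpers

variable {R : Type*} [Ring R] [StarRing R]

lemma starLie_add_left (u v c : R) : starLie (u + v) c = starLie u c + starLie v c := by
  unfold starLie; rw [add_mul, star_add, mul_add]; abel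

lemma starLie_sub_left (u v c : R) : starLie (u - v) c = starLie u c - starLie v c := by
  unfold starLie; rw [sub_mul, star_sub, mul_sub]; abel

lemma starLie_add_right (c u v : R) : starLie c (u + v) = starLie c u + starLie c v := by
  unfold starLie; rw [mul_add, add_mul]; abel

lemma starLie_sub_right (c u v : R) : starLie c (u - v) = starLie c u - starLie c v := by
  unfold starLie; rw [mul_sub, sub_mul]; abel

lemma starLie_zero_left (c : R) : starLie 0 c = 0 := by simp [starLie]

lemma starLie_zero_right (c : R) : starLie c 0 = 0 := by simp [starLie]

lemma iterLie_zero (ξ : R) (k : ℕ) : (fun z => starLie z ξ)^[k] 0 = 0 := by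
  induction k with
  | zero => rfl
  | succ k ih => rw [Function.iterate_succ_apply, starLie_zero_left, ih]

lemma iterLie_add (ξ : R) (k : ℕ) (u v : R) :
    (fun z => starLie z ξ)^[k] (u + v)
      = (fun z => starLie z ξ)^[k] u + (fun z => starLie z ξ)^[k] v := by
  induction k generalizing u v with
  | zero => rfl
  | succ k ih =>
      rw [Function.iterate_succ_apply, Function.iterate_succ_apply,
        Function.iterate_succ_apply]
      show (fun z => starLie z ξ)^[k] (starLie (u + v) ξ) = _
      rw [starLie_add_left, ih]

lemma iterLie_sub (ξ : R) (k : ℕ) (u v : R) :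
    (fun z => starLie z ξ)^[k] (u - v)
      = (fun z => starLie z ξ)^[k] u - (fun z => starLie z ξ)^[k] v := by
  induction k generalizing u v with
  | zero => rfl
  | succ k ih =>
      rw [Function.iterate_succ_apply, Function.iterate_succ_apply,
        Function.iterate_succ_apply]
      show (fun z => starLie z ξ)^[k] (starLie (u - v) ξ) = _
      rw [starLie_sub_left, ih]

lemma iterLie_one (k : ℕ) (w : R) (hw : star w = -w) :
    (fun z => starLie z (1 : R))^[k] w = 2 ^ k • w := by
  induction k generalizing w with
  | zero => simp
  | succ k ih =>
      rw [Function.iterate_succ_apply]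
      have h1 : starLie w 1 = w + w := by
        rw [starLie, mul_one, one_mul, hw, sub_neg_eq_add]
      have h2 : star (w + w) = -(w + w) := by rw [star_add, hw]; abel
      show (fun z => starLie z (1:R))^[k] (starLie w 1) = _
      rw [h1, ih _ h2, pow_succ, mul_smul, two_nsmul]

lemma pn_add_left (n : ℕ) (u v c ξ : R) :
    pn n (u + v) c ξ = pn n u c ξ + pn n v c ξ := by
  unfold pn; rw [starLie_add_left, iterLie_add]

lemma pn_sub_left (n : ℕ) (u v c ξ : R) :
    pn n (u - v) c ξ = pn n u c ξ - pn n v c ξ := by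
  unfold pn; rw [starLie_sub_left, iterLie_sub]

lemma pn_add_right (n : ℕ) (c u v ξ : R) :
    pn n c (u + v) ξ = pn n c u ξ + pn n c v ξ := by
  unfold pn; rw [starLie_add_right, iterLie_add]

lemma pn_sub_right (n : ℕ) (c u v ξ : R) :
    pn n c (u - v) ξ = pn n c u ξ - pn n c v ξ := by
  unfold pn; rw [starLie_sub_right, iterLie_sub]

lemma pn_zero_left (n : ℕ) (c ξ : R) : pn n 0 c ξ = 0 := by
  unfold pn; rw [starLie_zero_left, iterLie_zero]

lemma pn_zero_right (n : ℕ) (c ξ : R) : pn n c 0 ξ = 0 := by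
  unfold pn; rw [starLie_zero_right, iterLie_zero]

end helpers

/-- cancel a nonzero complex scalar -/
lemma csmul_cancel {M : Type*} [AddCommGroup M] [Module ℂ M] {c : ℂ} (hc : c ≠ 0)
    {v : M} (h : c • v = 0) : v = 0 := by
  have h2 := congrArg (fun w => c⁻¹ • w) h
  simpa [smul_smul, inv_mul_cancel₀ hc] using h2

variable {A A' : Type*}
  [NormedRing A] [StarRing A] [CStarRing A] [NormedAlgebra ℂ A]
  [CompleteSpace A] [StarModule ℂ A]
  [NormedRing A'] [StarRing A'] [CStarRing A'] [NormedAlgebra ℂ A']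
  [CompleteSpace A'] [StarModule ℂ A']

theorem stmt5
    (P₁ : A) (hP₁proj : P₁ * P₁ = P₁) (hP₁star : star P₁ = P₁)
    (hP₁ne0 : P₁ ≠ 0) (hP₁ne1 : P₁ ≠ 1)
    (P₂ : A) (hP₂ : P₂ = 1 - P₁)
    (hspade : ∀ Pj ∈ ({P₁, P₂} : Set A), ∀ X : A, (∀ Y : A, Pj * Y * X = 0) → X = 0)
    (n : ℕ) (hn : 2 ≤ n)
    (φ : A → A') (hbij : Function.Bijective φ) (hunit : φ 1 = 1)
    (hbullet : ∀ a b : A, ∀ Ξ ∈ ({P₁, P₂, 1} : Set A),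
      φ (pn n a b Ξ) = pn n (φ a) (φ b) (φ Ξ))
    :
    ∀ a b : A, (∃ x : A, a = P₁ * x * P₂) → (∃ y : A, b = P₂ * y * P₁) →
      φ (a + b) = φ a + φ b := by
  rintro a b ⟨x, hax⟩ ⟨y, hby⟩
  -- basic projection facts
  have hP₂star : star P₂ = P₂ := by rw [hP₂, star_sub, star_one, hP₁star]
  have hP₁P₂ : P₁ * P₂ = 0 := by rw [hP₂, mul_sub, mul_one, hP₁proj, sub_self]
  have hP₂P₁ : P₂ * P₁ = 0 := by rw [hP₂, sub_mul, one_mul, hP₁proj, sub_self]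
  have hP₂proj : P₂ * P₂ = P₂ := by
    rw [hP₂, mul_sub, mul_one, sub_mul, one_mul, hP₁proj]
    abel
  have hP₁₂ : P₁ + P₂ = 1 := by rw [hP₂]; abel
  have h1mem : (1 : A) ∈ ({P₁, P₂, 1} : Set A) := by simp
  -- Peirce facts about a and b
  have haP₁ : a * P₁ = 0 := by rw [hax, mul_assoc (P₁ * x), hP₂P₁, mul_zero]
  have haP₂ : a * P₂ = a := by rw [hax, mul_assoc (P₁ * x), hP₂proj]
  have hP₁a : P₁ * a = a := by rw [hax, ← mul_assoc, ← mul_assoc, hP₁proj]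
  have hP₂a : P₂ * a = 0 := by rw [hax, ← mul_assoc, ← mul_assoc, hP₂P₁, zero_mul, zero_mul]
  have hstara : star a = P₂ * star x * P₁ := by
    rw [hax, star_mul, star_mul, hP₁star, hP₂star, mul_assoc]
  have hP₁stara : P₁ * star a = 0 := by
    rw [hstara, ← mul_assoc, ← mul_assoc, hP₁P₂, zero_mul, zero_mul]
  have hbP₂ : b * P₂ = 0 := by rw [hby, mul_assoc (P₂ * y), hP₁P₂, mul_zero]
  have hstarb : star b = P₁ * star y * P₂ := by
    rw [hby, star_mul, star_mul, hP₁star, hP₂star, mul_assoc]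
  have hP₂starb : P₂ * star b = 0 := by
    rw [hstarb, ← mul_assoc, ← mul_assoc, hP₂P₁, zero_mul, zero_mul]
  -- φ 0 = 0
  obtain ⟨z, hz⟩ := hbij.2 (0 : A')
  have hφ0 : φ 0 = 0 := by
    have h := hbullet z 0 1 h1mem
    rw [pn_zero_right] at h
    rw [h, hz, pn_zero_left]
  -- the preimage T of φ a + φ b
  obtain ⟨T, hT⟩ := hbij.2 (φ a + φ b)
  -- key derived identities
  have keyL : ∀ c : A, pn n a c 1 = 0 ∨ pn n b c 1 = 0 → pn n (T - (a + b)) c 1 = 0 := by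
    intro c hc
    have hT' : φ (pn n T c 1) = φ (pn n a c 1) + φ (pn n b c 1) := by
      rw [hbullet T c 1 h1mem, hT, pn_add_left, hbullet a c 1 h1mem, hbullet b c 1 h1mem]
    rcases hc with h | h
    · rw [h, hφ0, zero_add] at hT'
      have h2 := hbij.1 hT'
      rw [pn_sub_left, pn_add_left, h2, h, zero_add, sub_self]
    · rw [h, hφ0, add_zero] at hT'
      have h2 := hbij.1 hT'
      rw [pn_sub_left, pn_add_left, h2, h, add_zero, sub_self]
  have keyR : ∀ c : A, pn n c a 1 = 0 ∨ pn n c b 1 = 0 → pn n c (T - (a + b)) 1 = 0 := by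
    intro c hc
    have hT' : φ (pn n c T 1) = φ (pn n c a 1) + φ (pn n c b 1) := by
      rw [hbullet c T 1 h1mem, hT, pn_add_right, hbullet c a 1 h1mem, hbullet c b 1 h1mem]
    rcases hc with h | h
    · rw [h, hφ0, zero_add] at hT'
      have h2 := hbij.1 hT'
      rw [pn_sub_right, pn_add_right, h2, h, zero_add, sub_self]
    · rw [h, hφ0, add_zero] at hT'
      have h2 := hbij.1 hT'
      rw [pn_sub_right, pn_add_right, h2, h, add_zero, sub_self]
  set D : A := T - (a + b) with hD
  -- three equations
  have e1 : pn n D P₁ 1 = 0 := by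
    refine keyL P₁ (Or.inl ?_)
    unfold pn
    rw [show starLie a P₁ = 0 by rw [starLie, haP₁, hP₁stara, sub_self], iterLie_zero]
  have e2 : pn n D P₂ 1 = 0 := by
    refine keyL P₂ (Or.inr ?_)
    unfold pn
    rw [show starLie b P₂ = 0 by rw [starLie, hbP₂, hP₂starb, sub_self], iterLie_zero]
  have hx₀star : star (Complex.I • (P₁ - P₂)) = -(Complex.I • (P₁ - P₂)) := by
    rw [star_smul, star_sub, hP₁star, hP₂star, Complex.star_def, Complex.conj_I, neg_smul]
  have e3 : pn n (Complex.I • (P₁ - P₂)) D 1 = 0 := by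
    refine keyR _ (Or.inl ?_)
    unfold pn
    have hw : starLie (Complex.I • (P₁ - P₂)) a = 0 := by
      rw [starLie, hx₀star, smul_mul_assoc, mul_neg, mul_smul_comm,
        sub_mul, hP₁a, hP₂a, sub_zero, mul_sub, haP₁, haP₂, zero_sub, smul_neg]
      abel
    rw [hw, iterLie_zero]
  -- a skew element w with (iterate) = 0 must vanish
  have kill : ∀ w : A, star w = -w → (fun z => starLie z (1:A))^[n-2] w = 0 → w = 0 := by
    intro w hw h
    rw [iterLie_one _ _ hw] at h
    have h2 : ((2 ^ (n - 2) : ℕ) : ℂ) • w = 0 := by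
      rw [Nat.cast_smul_eq_nsmul]; exact h
    exact csmul_cancel (Nat.cast_ne_zero.mpr (pow_ne_zero _ two_ne_zero)) h2
  -- from e1 : D * P₁ = P₁ * star D
  have g1 : D * P₁ = P₁ * star D := by
    have hskew : star (starLie D P₁) = -(starLie D P₁) := by
      rw [starLie, star_sub, star_mul, star_mul, hP₁star, star_star, neg_sub]
    have := kill _ hskew e1
    rw [starLie] at this
    exact sub_eq_zero.mp this
  have g2 : D * P₂ = P₂ * star D := by
    have hskew : star (starLie D P₂) = -(starLie D P₂) := by
      rw [starLie, star_sub, star_mul, star_mul, hP₂star, star_star, neg_sub]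
    have := kill _ hskew e2
    rw [starLie] at this
    exact sub_eq_zero.mp this
  -- D is self-adjoint
  have hDstar : star D = D := by
    have h := congrArg₂ (· + ·) g1 g2
    simp only [← mul_add, ← add_mul, hP₁₂, mul_one, one_mul] at h
    exact h.symm
  -- from e3
  have g3 : (P₁ - P₂) * D = -(D * (P₁ - P₂)) := by
    have hskew : star (starLie (Complex.I • (P₁ - P₂)) D) = -(starLie (Complex.I • (P₁ - P₂)) D) := by
      rw [starLie, star_sub, star_mul, star_mul, star_star, hDstar, neg_sub]
    have h := kill _ hskew e3
    rw [starLie, hx₀star, sub_eq_zero, smul_mul_assoc, mul_neg, mul_smul_comm] at h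
    have h2 : (Complex.I) • ((P₁ - P₂) * D) = Complex.I • (-(D * (P₁ - P₂))) := by
      rw [smul_neg]; exact h
    have h3 := congrArg (fun w => (Complex.I)⁻¹ • w) h2
    simpa [smul_smul, inv_mul_cancel₀ Complex.I_ne_zero] using h3
  -- but D commutes with P₁ - P₂ :
  have g4 : (P₁ - P₂) * D = D * (P₁ - P₂) := by
    have hg1 : D * P₁ = P₁ * D := by rw [g1, hDstar]
    have hg2 : D * P₂ = P₂ * D := by rw [g2, hDstar]
    calc (P₁ - P₂) * D = P₁ * D - P₂ * D := sub_mul P₁ P₂ D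
    _ = D * P₁ - D * P₂ := by rw [hg1, hg2]
    _ = D * (P₁ - P₂) := (mul_sub D P₁ P₂).symm
  -- hence (P₁ - P₂) * D = 0
  have g5 : (P₁ - P₂) * D = 0 := by
    have h : (2 : ℂ) • ((P₁ - P₂) * D) = 0 := by
      rw [two_smul]
      nth_rewrite 1 [g3]
      rw [← g4, neg_add_cancel]
    exact csmul_cancel two_ne_zero h
  -- conclude D = 0
  have h12 : P₁ * D = P₂ * D := by
    have h0 : P₁ * D - P₂ * D = 0 := by rw [← sub_mul]; exact g5
    exact sub_eq_zero.mp h0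
  have hP₂D : P₂ * D = 0 := by
    have h2 := congrArg (fun w => P₂ * w) h12
    simp only [← mul_assoc, hP₂P₁, hP₂proj, zero_mul] at h2
    exact h2.symm
  have hP₁D : P₁ * D = 0 := by rw [h12, hP₂D]
  have hD0 : D = 0 := by
    calc D = (P₁ + P₂) * D := by rw [hP₁₂, one_mul]
    _ = P₁ * D + P₂ * D := by rw [add_mul]
    _ = 0 := by rw [hP₁D, hP₂D, add_zero]
  have hTab : T = a + b := by
    have := sub_eq_zero.mp (hD ▸ hD0)
    exact this
  rw [← hTab, hT]
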